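/- Split equalizers from pointed endofunctors: let M : B → B be an endofunctor of a category B and η : 1_B ⟹ M a natural transformation such that η_B is a regular monomorphism and η_C is a monomorphism for every object C. Then for every object B, the fork B --η_B--> M B with parallel pair η_{MB}, M η_B : M B → M² B is an equalizer. -/
import Mathlib


open CategoryTheory CategoryTheory.Limits

/-- Let `M : B ⥤ B` be an endofunctor and `η : 𝟭 B ⟶ M` a natural
transformation whose components are regular monomorphisms (in particular monomorphisms).
Then for every object `B`, the fork `B --η_B--> M B` over the parallel pair
`η_{M B}, M η_B : M B ⟶ M² B` is an equalizer. -/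
theorem pointed_endofunctor_equalizer {B : Type*} [Category B]
    (M : B ⥤ B) (η : 𝟭 B ⟶ M)
    (hreg : ∀ X : B, RegularMono (η.app X))
    (hmono : ∀ X : B, Mono (η.app X)) :
    ∀ X : B, Nonempty (IsLimit (Fork.ofι (η.app X)
      (by simpa using η.naturality (η.app X) :
        η.app X ≫ η.app (M.obj X) = η.app X ≫ M.map (η.app X)))) := by
  intro X
  have hX := hreg X
  have key : ∀ (s : Fork (η.app (M.obj X)) (M.map (η.app X))),
      s.ι ≫ hX.left = s.ι ≫ hX.right := by
    intro s
    have hc := s.condition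
    have := hmono hX.Z
    rw [← cancel_mono (η.app hX.Z)]
    have h1 := η.naturality hX.left
    have h2 := η.naturality hX.right
    simp only [Functor.id_map] at h1 h2
    rw [Category.assoc, Category.assoc, h1, h2, ← Category.assoc, ← Category.assoc,
      hc, Category.assoc, Category.assoc, ← M.map_comp, ← M.map_comp, hX.w]
  classical
  refine ⟨Fork.IsLimit.mk _
    (fun s => (Fork.IsLimit.lift' hX.isLimit s.ι (key s)).1)
    (fun s => (Fork.IsLimit.lift' hX.isLimit s.ι (key s)).2)
    (fun s m hm => ?_)⟩
  have := hmono X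
  rw [← cancel_mono (η.app X)]
  have hm' : m ≫ η.app X = s.ι := hm
  rw [hm']
  exact ((Fork.IsLimit.lift' hX.isLimit s.ι (key s)).2).symm
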